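/- With π_f(X) = Σ_{n≤X} O_f(n) where O_f(n) = (1/n)Σ_{d|n} μ(n/d)(2^d-1)|2^d-1|_3, one has limsup_{X→∞} X·π_f(X)/2^{X+1} ≤ 1 and liminf_{X→∞} X·π_f(X)/2^{X+1} ≥ 1/3. -/

import Mathlib

open Finset

instance fact3 : Fact (Nat.Prime 3) := ⟨by norm_num⟩

noncomputable def aQ (d : ℕ) : ℚ := ((2:ℚ)^d - 1) * padicNorm 3 ((2:ℚ)^d - 1)

lemma two_pow_cast (d : ℕ) : ((2:ℚ)^d - 1) = (((2^d - 1 : ℤ) : ℚ)) := by push_cast; ring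

lemma aQ_nonneg (d : ℕ) : 0 ≤ aQ d := by
  have h1 : (1:ℚ) ≤ 2^d := one_le_pow₀ (by norm_num)
  exact mul_nonneg (by linarith) (padicNorm.nonneg _)

lemma aQ_le (d : ℕ) : aQ d ≤ 2^d := by
  have h1 : (1:ℚ) ≤ 2^d := one_le_pow₀ (by norm_num)
  have h2 : padicNorm 3 ((2:ℚ)^d - 1) ≤ 1 := by
    rw [two_pow_cast]; exact padicNorm.of_int _
  have h3 : 0 ≤ padicNorm 3 ((2:ℚ)^d - 1) := padicNorm.nonneg _
  calc aQ d ≤ ((2:ℚ)^d - 1) * 1 := mul_le_mul_of_nonneg_left h2 (by linarith)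
    _ ≤ 2^d := by linarith

lemma aQ_odd (d : ℕ) (hd : d % 2 = 1) : aQ d = 2^d - 1 := by
  have hdvd : ¬ ((3:ℤ) ∣ (2^d - 1)) := by
    intro h
    have h2 : ((2^d - 1 : ℤ) : ZMod 3) = 0 := by
      exact_mod_cast (ZMod.intCast_zmod_eq_zero_iff_dvd _ 3).2 h
    rw [show d = 2 * (d/2) + 1 by omega] at h2
    push_cast at h2
    rw [pow_succ, pow_mul] at h2
    have h4 : ((2:ZMod 3)^2) = 1 := by decide
    rw [h4, one_pow] at h2
    revert h2; decide
  have hval : padicNorm 3 ((2:ℚ)^d - 1) = 1 := by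
    rw [two_pow_cast]; exact (padicNorm.int_eq_one_iff _).2 hdvd
  rw [aQ, hval, mul_one]

lemma aQ_even (d : ℕ) (hd : d % 2 = 0) : aQ d ≤ 2^d / 3 := by
  have hdvd : (3:ℤ) ∣ (2^d - 1) := by
    have h2 : ((2^d - 1 : ℤ) : ZMod 3) = 0 := by
      rw [show d = 2 * (d/2) by omega]
      push_cast
      rw [pow_mul]
      have h4 : ((2:ZMod 3)^2) = 1 := by decide
      rw [h4, one_pow]
      decide
    exact_mod_cast (ZMod.intCast_zmod_eq_zero_iff_dvd _ 3).1 h2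
  obtain ⟨k, hk⟩ := hdvd
  have hq : ((2:ℚ)^d - 1) = (3:ℚ) * (k:ℚ) := by
    rw [two_pow_cast, hk]; push_cast; ring
  have hnorm : padicNorm 3 ((2:ℚ)^d - 1) ≤ 1/3 := by
    rw [hq, padicNorm.mul]
    have h3 : padicNorm 3 (3:ℚ) = (3:ℚ)⁻¹ := by
      have := padicNorm.padicNorm_p (p := 3) (by norm_num)
      simpa using this
    rw [h3]
    have := padicNorm.of_int (p := 3) k
    have hnn := padicNorm.nonneg (p := 3) ((k:ℤ):ℚ)
    push_cast at this hnn ⊢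
    nlinarith
  have h1 : (1:ℚ) ≤ 2^d := one_le_pow₀ (by norm_num)
  calc aQ d ≤ ((2:ℚ)^d - 1) * (1/3) :=
        mul_le_mul_of_nonneg_left hnorm (by linarith)
    _ ≤ 2^d / 3 := by linarith


noncomputable def bQ (n : ℕ) : ℚ :=
  ∑ d ∈ n.divisors, (ArithmeticFunction.moebius (n/d) : ℚ) * aQ d


lemma moebius_abs_le (k : ℕ) : |(ArithmeticFunction.moebius k : ℚ)| ≤ 1 := by
  rcases ArithmeticFunction.moebius_eq_or k with h | h | h <;> rw [h] <;> norm_num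

lemma geomQ_le (m : ℕ) : (∑ d ∈ Finset.Icc 1 m, (2:ℚ)^d) ≤ 2^(m+1) := by
  induction m with
  | zero => simp
  | succ k ih =>
    rw [Finset.sum_Icc_succ_top (by omega)]
    have : (2:ℚ)^(k+1) ≤ 2^(k+1) := le_refl _
    rw [pow_succ (2:ℚ) (k+1)]
    linarith

lemma properDivisors_subset (n : ℕ) : n.properDivisors ⊆ Finset.Icc 1 (n/2) := by
  intro d hd
  have h1 := Nat.pos_of_mem_properDivisors hd
  obtain ⟨hdvd, hlt⟩ := Nat.mem_properDivisors.1 hd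
  obtain ⟨k, hk⟩ := hdvd
  have hk2 : 2 ≤ k := by
    rcases Nat.lt_or_ge k 2 with h | h
    · interval_cases k <;> omega
    · exact h
  simp only [Finset.mem_Icc]
  constructor
  · omega
  · rw [Nat.le_div_iff_mul_le (by norm_num)]
    nlinarith

lemma bQ_bounds (n : ℕ) (hn : 1 ≤ n) :
    aQ n - 2^(n/2+1) ≤ bQ n ∧ bQ n ≤ aQ n + 2^(n/2+1) := by
  have hins : insert n n.properDivisors = n.divisors :=
    Nat.insert_self_properDivisors (by omega)
  have hnot : n ∉ n.properDivisors := Nat.self_notMem_properDivisors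
  have hsplit : bQ n = (ArithmeticFunction.moebius (n/n) : ℚ) * aQ n +
      ∑ d ∈ n.properDivisors, (ArithmeticFunction.moebius (n/d) : ℚ) * aQ d := by
    rw [bQ, ← hins, Finset.sum_insert hnot]
  rw [Nat.div_self (by omega)] at hsplit
  simp only [ArithmeticFunction.moebius_apply_one] at hsplit
  push_cast at hsplit
  rw [one_mul] at hsplit
  have hR : |∑ d ∈ n.properDivisors, (ArithmeticFunction.moebius (n/d) : ℚ) * aQ d|
      ≤ 2^(n/2+1) := by
    calc |∑ d ∈ n.properDivisors, (ArithmeticFunction.moebius (n/d) : ℚ) * aQ d|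
        ≤ ∑ d ∈ n.properDivisors, |(ArithmeticFunction.moebius (n/d) : ℚ) * aQ d| :=
          Finset.abs_sum_le_sum_abs _ _
      _ ≤ ∑ d ∈ n.properDivisors, (2:ℚ)^d := by
          apply Finset.sum_le_sum
          intro d hd
          rw [abs_mul]
          have h1 := moebius_abs_le (n/d)
          have h2 : |aQ d| = aQ d := abs_of_nonneg (aQ_nonneg d)
          rw [h2]
          have := aQ_le d
          have := aQ_nonneg d
          nlinarith
      _ ≤ ∑ d ∈ Finset.Icc 1 (n/2), (2:ℚ)^d := by
          apply Finset.sum_le_sum_of_subset_of_nonneg (properDivisors_subset n)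
          intro i _ _; positivity
      _ ≤ 2^(n/2+1) := geomQ_le _
  rw [abs_le] at hR
  constructor <;> [linarith [hR.1]; linarith [hR.2]]


noncomputable def cQ (n : ℕ) : ℚ := if n % 2 = 0 then (2:ℚ)^n/3 else 2^n
noncomputable def oQ (n : ℕ) : ℚ := if n % 2 = 1 then (2:ℚ)^n else 0
noncomputable def WQ (X : ℕ) : ℚ := ∑ n ∈ Finset.Icc 1 X, cQ n / n
noncomputable def WoQ (X : ℕ) : ℚ := ∑ n ∈ Finset.Icc 1 X, oQ n / n
noncomputable def EQ (X : ℕ) : ℚ := ∑ n ∈ Finset.Icc 1 X, (2:ℚ)^(n/2+1)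

lemma WQ_succ (X : ℕ) : WQ (X+1) = WQ X + cQ (X+1) / (X+1) := by
  rw [WQ, WQ, Finset.sum_Icc_succ_top (by omega)]
  push_cast; ring
lemma WoQ_succ (X : ℕ) : WoQ (X+1) = WoQ X + oQ (X+1) / (X+1) := by
  rw [WoQ, WoQ, Finset.sum_Icc_succ_top (by omega)]
  push_cast; ring
lemma EQ_succ (X : ℕ) : EQ (X+1) = EQ X + (2:ℚ)^((X+1)/2+1) := by
  rw [EQ, EQ, Finset.sum_Icc_succ_top (by omega)]

lemma WQ_nonneg (X : ℕ) : 0 ≤ WQ X := by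
  apply Finset.sum_nonneg
  intro n _
  have : 0 ≤ cQ n := by unfold cQ; split <;> positivity
  positivity

lemma WoQ_nonneg (X : ℕ) : 0 ≤ WoQ X := by
  apply Finset.sum_nonneg
  intro n _
  have : 0 ≤ oQ n := by unfold oQ; split <;> positivity
  positivity

lemma EQ_bound : ∀ X : ℕ, EQ X ≤ (if X % 2 = 0 then 10 else 13) * 2^(X/2) := by
  intro X
  induction X with
  | zero => simp [EQ]
  | succ k ih =>
    rw [EQ_succ]
    rcases Nat.even_or_odd k with hk | hk
    · have h2 : k % 2 = 0 := Nat.even_iff.1 hk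
      have h3 : (k+1) % 2 = 1 := by omega
      have h4 : (k+1)/2 = k/2 := by omega
      rw [h2] at ih
      simp only [h3, h4]
      norm_num at ih ⊢
      have : (2:ℚ)^(k/2+1) = 2 * 2^(k/2) := by ring
      have hp : (0:ℚ) ≤ 2^(k/2) := by positivity
      rw [this]; linarith
    · have h2 : k % 2 = 1 := Nat.odd_iff.1 hk
      have h3 : (k+1) % 2 = 0 := by omega
      have h4 : (k+1)/2 = k/2 + 1 := by omega
      rw [h2] at ih
      simp only [h3, h4]
      norm_num at ih ⊢
      have e1 : (2:ℚ)^(k/2+1+1) = 4 * 2^(k/2) := by ring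
      have e2 : (10:ℚ) * 2^(k/2+1) = 20 * 2^(k/2) := by ring
      have hp : (0:ℚ) ≤ 2^(k/2) := by positivity
      rw [e1, e2]; linarith

lemma EQ_bound' (X : ℕ) : EQ X ≤ 13 * 2^(X/2) := by
  have := EQ_bound X
  have h2 : (0:ℚ) < 2^(X/2) := by positivity
  split at this <;> linarith

-- W upper bound
lemma WQ_bound : ∀ X : ℕ, 10 ≤ X →
    (X:ℚ) * WQ X ≤ (if X % 2 = 0 then (11:ℚ)/8 else 15/8) * 2^X := by
  intro X hX
  induction X, hX using Nat.le_induction with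
  | base =>
    have h10 : WQ 10 = 43028/315 := by
      have h0 : WQ 0 = 0 := by simp [WQ]
      rw [show (10:ℕ) = 0+1+1+1+1+1+1+1+1+1+1 by norm_num]
      rw [WQ_succ, WQ_succ, WQ_succ, WQ_succ, WQ_succ, WQ_succ, WQ_succ, WQ_succ,
        WQ_succ, WQ_succ, h0]
      norm_num [cQ]
    rw [h10]
    norm_num
  | succ X hX ih =>
    have hx : (10:ℚ) ≤ X := by exact_mod_cast hX
    have hP : (0:ℚ) < 2^X := by positivity
    have hw : 0 ≤ WQ X := WQ_nonneg X
    have hxpos : (0:ℚ) < X := by linarith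
    rw [WQ_succ]
    have hx1 : ((X:ℚ)+1) ≠ 0 := by linarith
    have hcast : ((X+1 : ℕ) : ℚ) = (X:ℚ)+1 := by push_cast; ring
    rcases Nat.even_or_odd X with hk | hk
    · -- X even, X+1 odd
      have h2 : X % 2 = 0 := Nat.even_iff.1 hk
      have h3 : (X+1) % 2 = 1 := by omega
      rw [h2] at ih; norm_num at ih
      simp only [h3]; norm_num
      have hc : cQ (X+1) = 2^(X+1) := by simp only [cQ, h3]; norm_num
      rw [hc]
      have hterm : ((X:ℚ)+1) * (WQ X + 2^(X+1)/((X:ℚ)+1)) =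
          ((X:ℚ)+1) * WQ X + 2^(X+1) := by field_simp
      rw [hterm]
      have hWle : WQ X ≤ (11/8) * 2^X / X := by
        rw [le_div_iff₀ hxpos]; linarith [ih]
      have : ((X:ℚ)+1) * WQ X ≤ (11/8) * 2^X + (11/8) * 2^X / X := by
        have := mul_le_mul_of_nonneg_left hWle (by linarith : (0:ℚ) ≤ (X:ℚ)+1)
        calc ((X:ℚ)+1) * WQ X ≤ ((X:ℚ)+1) * ((11/8) * 2^X / X) := this
          _ = (11/8) * 2^X + (11/8) * 2^X / X := by field_simp
      have hdiv : (11/8) * (2:ℚ)^X / X ≤ (11/80) * 2^X := by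
        rw [div_le_iff₀ hxpos]; nlinarith
      have hpow : (2:ℚ)^(X+1) = 2 * 2^X := by ring
      rw [hpow]; nlinarith
    · -- X odd, X+1 even
      have h2 : X % 2 = 1 := Nat.odd_iff.1 hk
      have h3 : (X+1) % 2 = 0 := by omega
      rw [h2] at ih; norm_num at ih
      simp only [h3]; norm_num
      have hc : cQ (X+1) = 2^(X+1)/3 := by simp only [cQ, h3]; norm_num
      rw [hc]
      have hterm : ((X:ℚ)+1) * (WQ X + 2^(X+1)/3/((X:ℚ)+1)) =
          ((X:ℚ)+1) * WQ X + 2^(X+1)/3 := by field_simp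
      rw [hterm]
      have hWle : WQ X ≤ (15/8) * 2^X / X := by
        rw [le_div_iff₀ hxpos]; linarith [ih]
      have : ((X:ℚ)+1) * WQ X ≤ (15/8) * 2^X + (15/8) * 2^X / X := by
        have := mul_le_mul_of_nonneg_left hWle (by linarith : (0:ℚ) ≤ (X:ℚ)+1)
        calc ((X:ℚ)+1) * WQ X ≤ ((X:ℚ)+1) * ((15/8) * 2^X / X) := this
          _ = (15/8) * 2^X + (15/8) * 2^X / X := by field_simp
      have hdiv : (15/8) * (2:ℚ)^X / X ≤ (15/80) * 2^X := by
        rw [div_le_iff₀ hxpos]; nlinarith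
      have hpow : (2:ℚ)^(X+1) = 2 * 2^X := by ring
      rw [hpow]; nlinarith

lemma WQ_bound' (X : ℕ) (hX : 10 ≤ X) : (X:ℚ) * WQ X ≤ (15/8) * 2^X := by
  have := WQ_bound X hX
  have h2 : (0:ℚ) < 2^X := by positivity
  split at this <;> linarith

lemma WoQ_bound : ∀ X : ℕ, 2 ≤ X →
    (if X % 2 = 0 then (2:ℚ)/3 * X + 2/3 else (4:ℚ)/3 * X + 2/3) * 2^X
      ≤ (X:ℚ)^2 * WoQ X := by
  intro X hX
  induction X, hX using Nat.le_induction with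
  | base =>
    have h0 : WoQ 0 = 0 := by simp [WoQ]
    have h2 : WoQ 2 = 2 := by
      rw [show (2:ℕ) = 0+1+1 by norm_num, WoQ_succ, WoQ_succ, h0]
      norm_num [oQ]
    rw [h2]; norm_num
  | succ X hX ih =>
    have hx : (2:ℚ) ≤ X := by exact_mod_cast hX
    have hP : (0:ℚ) < 2^X := by positivity
    have hw : 0 ≤ WoQ X := WoQ_nonneg X
    have hxpos : (0:ℚ) < X := by linarith
    rw [WoQ_succ]
    rcases Nat.even_or_odd X with hk | hk
    · -- X even, X+1 odd
      have h2 : X % 2 = 0 := Nat.even_iff.1 hk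
      have h3 : (X+1) % 2 = 1 := by omega
      rw [h2] at ih; norm_num at ih
      simp only [h3]; norm_num
      have ho : oQ (X+1) = 2^(X+1) := by simp only [oQ, h3]; norm_num
      rw [ho]
      push_cast
      have hterm : ((X:ℚ)+1)^2 * (WoQ X + 2^(X+1)/((X:ℚ)+1)) =
          ((X:ℚ)+1)^2 * WoQ X + ((X:ℚ)+1) * 2^(X+1) := by field_simp
      rw [hterm]
      have key := mul_le_mul_of_nonneg_left ih (by positivity : (0:ℚ) ≤ ((X:ℚ)+1)^2)
      have hpow : (2:ℚ)^(X+1) = 2 * 2^X := by ring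
      rw [hpow] at *
      nlinarith [key, hP.le, hxpos.le, mul_pos hxpos hP]
    · -- X odd, X+1 even
      have h2 : X % 2 = 1 := Nat.odd_iff.1 hk
      have h3 : (X+1) % 2 = 0 := by omega
      rw [h2] at ih; norm_num at ih
      simp only [h3]; norm_num
      have ho : oQ (X+1) = 0 := by simp only [oQ, h3]; norm_num
      rw [ho]
      push_cast
      rw [zero_div, add_zero]
      have key := mul_le_mul_of_nonneg_left ih (by positivity : (0:ℚ) ≤ ((X:ℚ)+1)^2)
      have hx2 : (0:ℚ) < (X:ℚ)^2 := by positivity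
      have hpow : (2:ℚ)^(X+1) = 2 * 2^X := by ring
      rw [hpow]
      nlinarith [key, hP.le, hxpos.le, mul_pos hxpos hP]

lemma WoQ_bound' (X : ℕ) (hX : 2 ≤ X) :
    ((2:ℚ)/3 * X + 2/3) * 2^X ≤ (X:ℚ)^2 * WoQ X := by
  have := WoQ_bound X hX
  have hx : (0:ℚ) ≤ X := by positivity
  have hP : (0:ℚ) < 2^X := by positivity
  split at this <;> nlinarith [this]

lemma g1 : ∀ m : ℕ, 12 ≤ m → 312 * m ≤ 2^m := by
  intro m hm
  induction m, hm using Nat.le_induction with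
  | base => norm_num
  | succ m hm ih =>
    have h2 : 312 ≤ 2^m := le_trans (by omega) ih
    rw [pow_succ]
    linarith

lemma g3 : ∀ m : ℕ, 20 ≤ m → 351 * m^2 ≤ 2^m := by
  intro m hm
  induction m, hm using Nat.le_induction with
  | base => norm_num
  | succ m hm ih =>
    have hpow : 2^(m+1) = 2^m + 2^m := by rw [pow_succ]; ring
    nlinarith [ih, hpow, hm]

lemma g4 : ∀ X : ℕ, 40 ≤ X → 3 * X^3 ≤ 2^X := by
  intro X hX
  induction X, hX using Nat.le_induction with
  | base => norm_num
  | succ X hX ih =>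
    have hpow : 2^(X+1) = 2^X + 2^X := by rw [pow_succ]; ring
    have h1 : 40 * X^2 ≤ X * X^2 := Nat.mul_le_mul_right _ hX
    have h2 : X ≤ X^2 := by nlinarith
    nlinarith [ih, hpow, hX, h1, h2]

noncomputable def piF (X : ℕ) : ℚ :=
  ∑ n ∈ Finset.Icc 1 X, (1 / (n : ℚ)) * ∑ d ∈ n.divisors,
    (ArithmeticFunction.moebius (n / d) : ℚ) *
      (((2 : ℚ) ^ d - 1) * padicNorm 3 ((2 : ℚ) ^ d - 1))

lemma piF_eq (X : ℕ) : piF X = ∑ n ∈ Finset.Icc 1 X, (1/(n:ℚ)) * bQ n := rfl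

lemma aQ_le_cQ (n : ℕ) : aQ n ≤ cQ n := by
  rcases Nat.even_or_odd n with h | h
  · have h2 : n % 2 = 0 := Nat.even_iff.1 h
    rw [cQ, if_pos h2]
    exact aQ_even n h2
  · have h2 : n % 2 = 1 := Nat.odd_iff.1 h
    rw [cQ, if_neg (by omega)]
    exact aQ_le n

lemma oQ_le_aQ (n : ℕ) : oQ n - 1 ≤ aQ n := by
  rcases Nat.even_or_odd n with h | h
  · have h2 : n % 2 = 0 := Nat.even_iff.1 h
    rw [oQ, if_neg (by omega)]
    linarith [aQ_nonneg n]
  · have h2 : n % 2 = 1 := Nat.odd_iff.1 h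
    rw [oQ, if_pos h2, aQ_odd n h2]

lemma piF_upper (X : ℕ) : piF X ≤ WQ X + EQ X := by
  rw [piF_eq, WQ, EQ, ← Finset.sum_add_distrib]
  apply Finset.sum_le_sum
  intro n hn
  have hn1 : 1 ≤ n := (Finset.mem_Icc.1 hn).1
  have hnq : (1:ℚ) ≤ n := by exact_mod_cast hn1
  have hnpos : (0:ℚ) < n := by linarith
  have hb := (bQ_bounds n hn1).2
  have hac := aQ_le_cQ n
  have hcnn : 0 ≤ cQ n := by rw [cQ]; split <;> positivity
  have he : (0:ℚ) < 2^(n/2+1) := by positivity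
  have h1 : (1/(n:ℚ)) * bQ n ≤ (1/(n:ℚ)) * (cQ n + 2^(n/2+1)) := by
    apply mul_le_mul_of_nonneg_left _ (by positivity)
    linarith
  have h2 : (1/(n:ℚ)) * (cQ n + 2^(n/2+1)) = cQ n / n + 2^(n/2+1)/n := by ring
  have h3 : (2:ℚ)^(n/2+1)/n ≤ 2^(n/2+1) := by
    rw [div_le_iff₀ hnpos]; nlinarith
  linarith

lemma piF_lower (X : ℕ) : WoQ X - X - EQ X ≤ piF X := by
  rw [piF_eq, WoQ, EQ]
  have hX : ((X:ℚ)) = ∑ _n ∈ Finset.Icc 1 X, (1:ℚ) := by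
    rw [Finset.sum_const, Nat.card_Icc]
    simp
  rw [hX, ← Finset.sum_sub_distrib, ← Finset.sum_sub_distrib]
  apply Finset.sum_le_sum
  intro n hn
  have hn1 : 1 ≤ n := (Finset.mem_Icc.1 hn).1
  have hnq : (1:ℚ) ≤ n := by exact_mod_cast hn1
  have hnpos : (0:ℚ) < n := by linarith
  have hb := (bQ_bounds n hn1).1
  have hoa := oQ_le_aQ n
  have he : (0:ℚ) < 2^(n/2+1) := by positivity
  have h1 : (1/(n:ℚ)) * (oQ n - 1 - 2^(n/2+1)) ≤ (1/(n:ℚ)) * bQ n := by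
    apply mul_le_mul_of_nonneg_left _ (by positivity)
    linarith
  have h2 : (1/(n:ℚ)) * (oQ n - 1 - 2^(n/2+1)) = oQ n / n - (1 + 2^(n/2+1))/n := by ring
  have h3 : (1 + (2:ℚ)^(n/2+1))/n ≤ 1 + 2^(n/2+1) := by
    rw [div_le_iff₀ hnpos]; nlinarith
  linarith

lemma pow_split (X : ℕ) : (2:ℚ)^X = 2^(X/2) * 2^(X - X/2) := by
  rw [← pow_add]
  congr 1
  omega

lemma err_bound_up (X : ℕ) (hX : 40 ≤ X) : 13 * (X:ℚ) * 2^(X/2) ≤ (1/8) * 2^X := by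
  set m := X - X/2 with hm
  have hm12 : 12 ≤ m := by omega
  have hXm : X ≤ 3*m := by omega
  have hnat : 104 * X ≤ 2^m := by
    calc 104 * X ≤ 104 * (3*m) := by omega
      _ = 312 * m := by ring
      _ ≤ 2^m := g1 m hm12
  have hq : (104:ℚ) * X ≤ 2^m := by exact_mod_cast hnat
  have hp : (0:ℚ) < 2^(X/2) := by positivity
  rw [pow_split X, ← hm]
  nlinarith

lemma err_bound_lo (X : ℕ) (hX : 40 ≤ X) : 39 * (X:ℚ)^2 * 2^(X/2) ≤ 2^X := by
  set m := X - X/2 with hm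
  have hm20 : 20 ≤ m := by omega
  have hXm : X ≤ 2*m := by omega
  have hnat : 39 * X^2 ≤ 2^m := by
    calc 39 * X^2 ≤ 39 * (2*m)^2 := by
          apply Nat.mul_le_mul_left
          exact Nat.pow_le_pow_left hXm 2
      _ = 156 * m^2 := by ring
      _ ≤ 351 * m^2 := by omega
      _ ≤ 2^m := g3 m hm20
  have hq : (39:ℚ) * X^2 ≤ 2^m := by exact_mod_cast hnat
  have hp : (0:ℚ) < 2^(X/2) := by positivity
  rw [pow_split X, ← hm]
  nlinarith

lemma main_up (X : ℕ) (hX : 40 ≤ X) : (X:ℚ) * piF X ≤ 2^(X+1) := by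
  have hx : (0:ℚ) ≤ X := by positivity
  have h1 := piF_upper X
  have h2 := WQ_bound' X (by omega)
  have h3 := EQ_bound' X
  have h4 : (X:ℚ) * EQ X ≤ 13 * X * 2^(X/2) := by nlinarith
  have h5 := err_bound_up X hX
  have hpow : (2:ℚ)^(X+1) = 2 * 2^X := by ring
  have h6 : (X:ℚ) * piF X ≤ X * WQ X + X * EQ X := by nlinarith
  rw [hpow]
  linarith

lemma main_lo (X : ℕ) (hX : 40 ≤ X) : (2/3) * (2:ℚ)^X ≤ X * piF X := by
  have hx : (40:ℚ) ≤ X := by exact_mod_cast hX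
  have hxpos : (0:ℚ) < X := by linarith
  have h1 := piF_lower X
  have h2 := WoQ_bound' X (by omega)
  have h3 := EQ_bound' X
  have hF : (0:ℚ) < 2^(X/2) := by positivity
  have hP : (0:ℚ) < 2^X := by positivity
  have hg4 : (3:ℚ) * X^3 ≤ 2^X := by exact_mod_cast g4 X hX
  have h5 := err_bound_lo X hX
  -- x^2 * piF ≥ x^2 * (WoQ - X - EQ) ≥ ((2/3)x+2/3)P - x^3 - 13 x^2 F
  have h6 : (X:ℚ)^2 * piF X ≥ (2/3 * X + 2/3) * 2^X - X^3 - 13 * X^2 * 2^(X/2) := by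
    have := mul_le_mul_of_nonneg_left h1 (by positivity : (0:ℚ) ≤ (X:ℚ)^2)
    have h7 : (X:ℚ)^2 * EQ X ≤ 13 * X^2 * 2^(X/2) := by nlinarith
    nlinarith
  have h8 : (X:ℚ)^3 + 13 * X^2 * 2^(X/2) ≤ (2/3) * 2^X := by nlinarith
  have h9 : (X:ℚ)^2 * piF X ≥ (2/3 * X) * 2^X := by nlinarith
  -- divide by x
  have h10 : (X:ℚ) * ((2/3) * 2^X) ≤ X * (X * piF X) := by nlinarith
  exact le_of_mul_le_mul_left (by linarith) hxpos

theorem pi_f_limsup_liminf :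
    Filter.limsup
      (fun X : ℕ =>
        (X : ℝ) * ((∑ n ∈ Finset.Icc 1 X, (1 / (n : ℚ)) * ∑ d ∈ n.divisors,
            (ArithmeticFunction.moebius (n / d) : ℚ) *
              (((2 : ℚ) ^ d - 1) * padicNorm 3 ((2 : ℚ) ^ d - 1)) : ℚ) : ℝ) /
          (2 : ℝ) ^ (X + 1))
      Filter.atTop ≤ 1 ∧
    (1 / 3 : ℝ) ≤ Filter.liminf
      (fun X : ℕ =>
        (X : ℝ) * ((∑ n ∈ Finset.Icc 1 X, (1 / (n : ℚ)) * ∑ d ∈ n.divisors,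
            (ArithmeticFunction.moebius (n / d) : ℚ) *
              (((2 : ℚ) ^ d - 1) * padicNorm 3 ((2 : ℚ) ^ d - 1)) : ℚ) : ℝ) /
          (2 : ℝ) ^ (X + 1))
      Filter.atTop := by
  set u : ℕ → ℝ := fun X =>
    (X : ℝ) * ((∑ n ∈ Finset.Icc 1 X, (1 / (n : ℚ)) * ∑ d ∈ n.divisors,
        (ArithmeticFunction.moebius (n / d) : ℚ) *
          (((2 : ℚ) ^ d - 1) * padicNorm 3 ((2 : ℚ) ^ d - 1)) : ℚ) : ℝ) /
      (2 : ℝ) ^ (X + 1) with hu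
  have hueq : ∀ X : ℕ, u X = (X : ℝ) * ((piF X : ℚ) : ℝ) / 2^(X+1) := fun X => rfl
  have hup : ∀ᶠ X : ℕ in Filter.atTop, u X ≤ 1 := by
    rw [Filter.eventually_atTop]
    refine ⟨40, fun X hX => ?_⟩
    rw [hueq]
    have h := main_up X hX
    have hq : ((X:ℚ) * piF X : ℚ) ≤ ((2:ℚ)^(X+1)) := h
    have hr : (X:ℝ) * ((piF X : ℚ) : ℝ) ≤ (2:ℝ)^(X+1) := by
      have := (Rat.cast_le (K := ℝ)).2 hq
      push_cast at this
      convert this using 2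
    have hpos : (0:ℝ) < 2^(X+1) := by positivity
    rw [div_le_one hpos]
    exact hr
  have hlo : ∀ᶠ X : ℕ in Filter.atTop, (1/3 : ℝ) ≤ u X := by
    rw [Filter.eventually_atTop]
    refine ⟨40, fun X hX => ?_⟩
    rw [hueq]
    have h := main_lo X hX
    have hr : (2/3 : ℝ) * 2^X ≤ (X:ℝ) * ((piF X : ℚ) : ℝ) := by
      have := (Rat.cast_le (K := ℝ)).2 h
      push_cast at this
      convert this using 2
    have hpos : (0:ℝ) < 2^(X+1) := by positivity
    rw [le_div_iff₀ hpos]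
    have hp : (2:ℝ)^(X+1) = 2 * 2^X := by ring
    rw [hp]
    linarith
  constructor
  · exact Filter.limsup_le_of_le
      (Filter.isCoboundedUnder_le_of_eventually_le _ hlo) hup
  · exact Filter.le_liminf_of_le
      (Filter.isCoboundedUnder_ge_of_eventually_le _ hup) hlo
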